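/- arXiv:0907.1103 — 3 statements merged into one kernel-verified Lean document; each statement's English description precedes it below -/
import Mathlib

section
/- For every ε > 0 there exists a positive integer m₀ such that for all m ≥ m₀ and all Δ ∈ {1, …, m−1}, we have 2·h_m − h_Δ − h_{m−Δ} ≥ ln 2 − ε. -/
/-- `binEnt m` is the Shannon entropy (in nats) of the binomial distribution
`Binomial(m, 1/2)`: `h_m = -∑_{i=0}^m binom(m,i) 2^{-m} ln(binom(m,i) 2^{-m})`. -/
noncomputable def binEnt (m : ℕ) : ℝ :=
  -∑ i ∈ Finset.range (m + 1),
      ((m.choose i : ℝ) / 2 ^ m) * Real.log ((m.choose i : ℝ) / 2 ^ m)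


section BinEntProof
open Real Filter Finset

lemma pascal_sum (m : ℕ) (f : ℕ → ℝ) :
    ∑ i ∈ range (m+2), ((m+1).choose i : ℝ) * f i
      = ∑ i ∈ range (m+1), (m.choose i : ℝ) * (f i + f (i+1)) := by
  rw [sum_range_succ' (fun i => ((m+1).choose i : ℝ) * f i) (m+1)]
  have h1 : ∑ i ∈ range (m+1), ((m+1).choose (i+1) : ℝ) * f (i+1)
      = ∑ i ∈ range (m+1), ((m.choose i : ℝ) * f (i+1) + (m.choose (i+1) : ℝ) * f (i+1)) := by
    refine sum_congr rfl fun i _ => ?_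
    rw [Nat.choose_succ_succ']
    push_cast; ring
  have h2 : ∑ i ∈ range (m+1), (m.choose (i+1) : ℝ) * f (i+1) + ((m+1).choose 0 : ℝ) * f 0
      = ∑ i ∈ range (m+2), (m.choose i : ℝ) * f i := by
    rw [sum_range_succ' (fun i => (m.choose i : ℝ) * f i) (m+1)]
    simp
  have h3 : ∑ i ∈ range (m+2), (m.choose i : ℝ) * f i
      = ∑ i ∈ range (m+1), (m.choose i : ℝ) * f i := by
    rw [sum_range_succ]
    simp [Nat.choose_eq_zero_of_lt (Nat.lt_succ_self m)]
  rw [h1, sum_add_distrib, add_assoc, h2, h3]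
  simp only [mul_add, sum_add_distrib]
  ring

lemma sum_choose_real (m : ℕ) : ∑ i ∈ range (m+1), (m.choose i : ℝ) = 2^m := by
  rw [← Nat.cast_sum, Nat.sum_range_choose]
  push_cast; ring

lemma sum_sq (m : ℕ) :
    ∑ i ∈ range (m+1), (m.choose i : ℝ) * (2*(i:ℝ) - (m:ℝ))^2 = (m:ℝ) * 2^m := by
  induction m with
  | zero => simp
  | succ m ih =>
    have key := pascal_sum m (fun i => (2*(i:ℝ) - ((m:ℝ)+1))^2)
    have e1 : ∑ i ∈ range (m+1+1), ((m+1).choose i : ℝ) * (2*(i:ℝ) - ((m:ℕ)+1:ℕ))^2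
        = ∑ i ∈ range (m+2), ((m+1).choose i : ℝ) * (2*(i:ℝ) - ((m:ℝ)+1))^2 := by
      push_cast; rfl
    rw [e1, key]
    have step : ∀ i ∈ range (m+1),
        (m.choose i : ℝ) * ((2*(i:ℝ) - ((m:ℝ)+1))^2 + (2*((i+1:ℕ):ℝ) - ((m:ℝ)+1))^2)
        = 2 * ((m.choose i : ℝ) * (2*(i:ℝ) - (m:ℝ))^2) + 2 * (m.choose i : ℝ) := by
      intro i _; push_cast; ring
    rw [sum_congr rfl step, sum_add_distrib, ← mul_sum, ← mul_sum, ih, sum_choose_real]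
    push_cast; ring

lemma sum_quart (m : ℕ) :
    ∑ i ∈ range (m+1), (m.choose i : ℝ) * (2*(i:ℝ) - (m:ℝ))^4 = (3*(m:ℝ)^2 - 2*(m:ℝ)) * 2^m := by
  induction m with
  | zero => simp
  | succ m ih =>
    have key := pascal_sum m (fun i => (2*(i:ℝ) - ((m:ℝ)+1))^4)
    have e1 : ∑ i ∈ range (m+1+1), ((m+1).choose i : ℝ) * (2*(i:ℝ) - ((m:ℕ)+1:ℕ))^4
        = ∑ i ∈ range (m+2), ((m+1).choose i : ℝ) * (2*(i:ℝ) - ((m:ℝ)+1))^4 := by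
      push_cast; rfl
    rw [e1, key]
    have step : ∀ i ∈ range (m+1),
        (m.choose i : ℝ) * ((2*(i:ℝ) - ((m:ℝ)+1))^4 + (2*((i+1:ℕ):ℝ) - ((m:ℝ)+1))^4)
        = 2 * ((m.choose i : ℝ) * (2*(i:ℝ) - (m:ℝ))^4)
          + 12 * ((m.choose i : ℝ) * (2*(i:ℝ) - (m:ℝ))^2) + 2 * (m.choose i : ℝ) := by
      intro i _; push_cast; ring
    rw [sum_congr rfl step, sum_add_distrib, sum_add_distrib,
      ← mul_sum, ← mul_sum, ← mul_sum, ih, sum_sq, sum_choose_real]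
    push_cast; ring

noncomputable def sErr (n : ℕ) : ℝ :=
  Real.log n.factorial - ((n:ℝ) * Real.log n - n + Real.log (2 * Real.pi * n) / 2)

lemma stirling_log (n : ℕ) :
    Real.log n.factorial = (n:ℝ) * Real.log n - n + Real.log (2 * Real.pi * n) / 2 + sErr n := by
  simp [sErr]

lemma sErr_eq (n : ℕ) (hn : 1 ≤ n) :
    sErr n = Real.log (Stirling.stirlingSeq n) - Real.log (Real.sqrt Real.pi) := by
  have hn0 : (0:ℝ) < n := by exact_mod_cast hn
  have hfac : (0:ℝ) < n.factorial := by exact_mod_cast n.factorial_pos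
  have hsq : (0:ℝ) < Real.sqrt (2 * n) := Real.sqrt_pos.2 (by positivity)
  have hpow : (0:ℝ) < ((n:ℝ) / Real.exp 1) ^ n := by positivity
  rw [Stirling.stirlingSeq, Real.log_div (ne_of_gt hfac) (by positivity),
    Real.log_mul (ne_of_gt hsq) (ne_of_gt hpow), Real.log_sqrt (by positivity),
    Real.log_pow, Real.log_div (ne_of_gt hn0) (Real.exp_ne_zero 1), Real.log_exp,
    Real.log_sqrt Real.pi_pos.le]
  rw [sErr, Real.log_mul (by positivity : (2*Real.pi : ℝ) ≠ 0) hn0.ne',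
    Real.log_mul (by norm_num : (2:ℝ) ≠ 0) Real.pi_ne_zero,
    Real.log_mul (by norm_num : (2:ℝ) ≠ 0) hn0.ne']
  ring

lemma sErr_tendsto : Tendsto sErr atTop (nhds 0) := by
  have h1 : Tendsto (fun n => Real.log (Stirling.stirlingSeq n) - Real.log (Real.sqrt Real.pi))
      atTop (nhds 0) := by
    have hπ : (0:ℝ) < Real.sqrt Real.pi := Real.sqrt_pos.2 Real.pi_pos
    have := (Real.continuousAt_log hπ.ne').tendsto.comp Stirling.tendsto_stirlingSeq_sqrt_pi
    have h2 := this.sub_const (Real.log (Real.sqrt Real.pi))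
    simpa using h2
  refine h1.congr' ?_
  filter_upwards [eventually_ge_atTop 1] with n hn
  exact (sErr_eq n hn).symm

lemma abs_log_one_sub_le {x : ℝ} (h0 : 0 ≤ x) (h1 : x ≤ 1/2) : |Real.log (1 - x)| ≤ 2 * x := by
  have hx : |x| < 1 := by rw [abs_of_nonneg h0]; linarith
  have := Real.abs_log_sub_add_sum_range_le hx 0
  simp only [range_zero, sum_empty, zero_add] at this
  calc |Real.log (1-x)| ≤ |x|^1 / (1 - |x|) := this
    _ ≤ 2 * x := by
        rw [abs_of_nonneg h0, pow_one, div_le_iff₀ (by linarith)]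
        nlinarith

lemma log_one_add_two (u : ℝ) (hu : |u| ≤ 1/4) :
    |Real.log (1 + 2*u) - (2*u - 2*u^2 + (8/3)*u^3)| ≤ 32 * u^4 := by
  have habs : |(-(2*u))| ≤ 1/2 := by
    rw [abs_neg, abs_mul, abs_of_nonneg (by norm_num : (0:ℝ) ≤ 2)]; linarith
  have hx : |(-(2*u))| < 1 := lt_of_le_of_lt habs (by norm_num)
  have key := Real.abs_log_sub_add_sum_range_le hx 3
  have hsum : ∑ i ∈ range 3, (-(2*u)) ^ (i + 1) / ((i:ℝ) + 1)
      = -(2*u) + (2*u)^2/2 - (2*u)^3/3 := by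
    simp [Finset.sum_range_succ]
    ring
  rw [hsum] at key
  have h1 : (1 : ℝ) - (-(2*u)) = 1 + 2*u := by ring
  rw [h1] at key
  have h2 : |(-(2*u))| ^ 4 / (1 - |(-(2*u))|) ≤ 32 * u^4 := by
    have h3 : |(-(2*u))|^4 = 16 * u^4 := by
      rw [abs_neg, abs_mul, abs_of_nonneg (by norm_num : (0:ℝ) ≤ 2), mul_pow,
        show |u|^4 = u^4 from by rw [← abs_pow, abs_of_nonneg (by positivity)]]
      norm_num
    rw [h3, div_le_iff₀ (by linarith)]
    nlinarith [pow_nonneg (sq_nonneg u) 2]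
  calc |Real.log (1 + 2*u) - (2*u - 2*u^2 + (8/3)*u^3)|
      = |(-(2*u) + (2*u)^2/2 - (2*u)^3/3) + Real.log (1+2*u)| := by
        congr 1; ring
    _ ≤ 32 * u^4 := le_trans key h2

-- the central KL-type bound

lemma kl_bound (u : ℝ) (hu : |u| ≤ 1/4) :
    |(1/2+u) * Real.log (1+2*u) + (1/2-u) * Real.log (1-2*u) - 2*u^2| ≤ 54 * u^4 := by
  have hp := log_one_add_two u hu
  have hm := log_one_add_two (-u) (by rwa [abs_neg])
  rw [show 1 + 2*(-u) = 1 - 2*u from by ring] at hm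
  set Ep := Real.log (1+2*u) - (2*u - 2*u^2 + (8/3)*u^3) with hEp
  set Em := Real.log (1-2*u) - (2*(-u) - 2*(-u)^2 + (8/3)*(-u)^3) with hEm
  have hu4 : (-u)^4 = u^4 := by ring
  rw [hu4] at hm
  have expand : (1/2+u) * Real.log (1+2*u) + (1/2-u) * Real.log (1-2*u) - 2*u^2
      = (16/3)*u^4 + (1/2+u)*Ep + (1/2-u)*Em := by
    rw [hEp, hEm]; ring
  rw [expand]
  have hbp : |1/2+u| ≤ 3/4 := by
    rw [abs_le] at hu ⊢; constructor <;> linarith [hu.1, hu.2]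
  have hbm : |1/2-u| ≤ 3/4 := by
    rw [abs_le] at hu ⊢; constructor <;> linarith [hu.1, hu.2]
  have hu4pos : (0:ℝ) ≤ u^4 := by positivity
  calc |(16/3)*u^4 + (1/2+u)*Ep + (1/2-u)*Em|
      ≤ |(16/3)*u^4| + |(1/2+u)*Ep| + |(1/2-u)*Em| := by
        exact le_trans (abs_add_le _ _) (by gcongr; exact abs_add_le _ _)
    _ ≤ (16/3)*u^4 + (3/4)*(32*u^4) + (3/4)*(32*u^4) := by
        gcongr
        · rw [abs_of_nonneg (by positivity)]
        · rw [abs_mul]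
          exact mul_le_mul hbp hp (abs_nonneg _) (by norm_num)
        · rw [abs_mul]
          exact mul_le_mul hbm hm (abs_nonneg _) (by norm_num)
    _ ≤ 54 * u^4 := by nlinarith

noncomputable def Gfun (m i : ℕ) : ℝ := (m:ℝ) * Real.log 2 - Real.log (m.choose i)

noncomputable def gApx (m i : ℕ) : ℝ :=
  Real.log (Real.pi * m / 2) / 2 + 2*((i:ℝ) - m/2)^2 / m

lemma good_key {M m i : ℕ} (hM : 1 ≤ M) (hm : 4*M ≤ m) (h1 : m ≤ 4*i) (h2 : 4*i ≤ 3*m) :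
    Gfun m i - gApx m i
      = ((m:ℝ)*((1/2+(((i:ℝ)-m/2)/m))*Real.log (1+2*(((i:ℝ)-m/2)/m))
            + (1/2-(((i:ℝ)-m/2)/m))*Real.log (1-2*(((i:ℝ)-m/2)/m)))
          - 2*(m:ℝ)*(((i:ℝ)-m/2)/m)^2)
        + (Real.log (1+2*(((i:ℝ)-m/2)/m)) + Real.log (1-2*(((i:ℝ)-m/2)/m)))/2
        + (sErr i + sErr (m-i) - sErr m) := by
  have him : i ≤ m := by omega
  have hi1 : 1 ≤ i := by omega
  have hmi1 : 1 ≤ m - i := by omega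
  have hm1 : 1 ≤ m := by omega
  set n : ℝ := (m:ℝ) with hn
  set u : ℝ := ((i:ℝ) - n/2)/n with hudef
  have hn0 : (0:ℝ) < n := by rw [hn]; exact_mod_cast hm1
  have hi0 : (0:ℝ) < (i:ℝ) := by exact_mod_cast hi1
  have hb0 : (0:ℝ) < ((m-i:ℕ):ℝ) := by exact_mod_cast hmi1
  have hcast : ((m-i:ℕ):ℝ) = n - (i:ℝ) := by
    push_cast [him]; ring
  have hnu : (i:ℝ) - n/2 = n*u := by
    rw [hudef]; field_simp
  have ha : (i:ℝ) = n*(1+2*u)/2 := by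
    have := hnu; nlinarith [hnu]
  have hb : ((m-i:ℕ):ℝ) = n*(1-2*u)/2 := by
    rw [hcast, ha]; ring
  have h1p : (0:ℝ) < 1+2*u := by
    have : 0 < n*(1+2*u)/2 := ha ▸ hi0
    nlinarith
  have h2p : (0:ℝ) < 1-2*u := by
    have : 0 < n*(1-2*u)/2 := hb ▸ hb0
    nlinarith
  have hC : (m.choose i : ℝ) = (m.factorial : ℝ) / ((i.factorial : ℝ) * ((m-i).factorial : ℝ)) :=
    Nat.cast_choose ℝ him
  have hf0 : ∀ k : ℕ, (0:ℝ) < k.factorial := fun k => by exact_mod_cast k.factorial_pos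
  have hlogC : Real.log (m.choose i)
      = Real.log m.factorial - Real.log i.factorial - Real.log (m-i).factorial := by
    rw [hC, Real.log_div (hf0 m).ne' (by positivity), Real.log_mul (hf0 i).ne' (hf0 _).ne']
    ring
  have hlogi : Real.log (i:ℝ) = Real.log n + Real.log (1+2*u) - Real.log 2 := by
    rw [ha, Real.log_div (by positivity) (by norm_num), Real.log_mul hn0.ne' h1p.ne']
  have hlogb : Real.log ((m-i:ℕ):ℝ) = Real.log n + Real.log (1-2*u) - Real.log 2 := by
    rw [hb, Real.log_div (by positivity) (by norm_num), Real.log_mul hn0.ne' h2p.ne']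
  have l1 : Real.log (2*Real.pi*n) = Real.log 2 + Real.log Real.pi + Real.log n := by
    rw [Real.log_mul (by positivity) hn0.ne', Real.log_mul (by norm_num) Real.pi_ne_zero]
  have l2 : Real.log (2*Real.pi*(i:ℝ)) = Real.log 2 + Real.log Real.pi + Real.log (i:ℝ) := by
    rw [Real.log_mul (by positivity) hi0.ne', Real.log_mul (by norm_num) Real.pi_ne_zero]
  have l3 : Real.log (2*Real.pi*((m-i:ℕ):ℝ)) = Real.log 2 + Real.log Real.pi + Real.log ((m-i:ℕ):ℝ) := by
    rw [Real.log_mul (by positivity) hb0.ne', Real.log_mul (by norm_num) Real.pi_ne_zero]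
  have l4 : Real.log (Real.pi*n/2) = Real.log Real.pi + Real.log n - Real.log 2 := by
    rw [Real.log_div (by positivity) (by norm_num), Real.log_mul Real.pi_ne_zero hn0.ne']
  rw [Gfun, gApx, hlogC, stirling_log m, stirling_log i, stirling_log (m-i), l1, l2, l3, l4,
    hlogi, hlogb, hnu]
  rw [ha, hb]
  field_simp
  ring

lemma good_est {M m i : ℕ} {δ : ℝ} (hδ : ∀ k, M ≤ k → |sErr k| ≤ δ)
    (hM : 1 ≤ M) (hm : 4*M ≤ m) (h1 : m ≤ 4*i) (h2 : 4*i ≤ 3*m) :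
    |Gfun m i - gApx m i|
      ≤ 54*((i:ℝ)-m/2)^4/m^3 + 4*((i:ℝ)-m/2)^2/m^2 + 3*δ := by
  have hm1 : 1 ≤ m := by omega
  have hn0 : (0:ℝ) < m := by exact_mod_cast hm1
  set u : ℝ := ((i:ℝ)-m/2)/m with hudef
  have hu : |u| ≤ 1/4 := by
    rw [hudef, abs_div, abs_of_nonneg hn0.le, div_le_iff₀ hn0]
    rw [abs_le]
    have hi4 : (m:ℝ) ≤ 4*i := by exact_mod_cast h1
    have hi4' : 4*(i:ℝ) ≤ 3*m := by exact_mod_cast h2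
    constructor <;> nlinarith
  have key := good_key hM hm h1 h2
  rw [key]
  have e1 : |(m:ℝ)*((1/2+u)*Real.log (1+2*u) + (1/2-u)*Real.log (1-2*u)) - 2*(m:ℝ)*u^2|
      ≤ 54*((i:ℝ)-m/2)^4/m^3 := by
    have : (m:ℝ)*((1/2+u)*Real.log (1+2*u) + (1/2-u)*Real.log (1-2*u)) - 2*(m:ℝ)*u^2
        = (m:ℝ) * ((1/2+u)*Real.log (1+2*u) + (1/2-u)*Real.log (1-2*u) - 2*u^2) := by ring
    rw [this, abs_mul, abs_of_nonneg hn0.le]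
    have h54 := kl_bound u hu
    have ht : ((i:ℝ)-m/2)^4 = u^4 * (m:ℝ)^4 := by
      rw [hudef]; field_simp
    rw [ht]
    calc (m:ℝ) * |(1/2+u)*Real.log (1+2*u) + (1/2-u)*Real.log (1-2*u) - 2*u^2|
        ≤ (m:ℝ) * (54*u^4) := by gcongr
      _ = 54*(u^4*(m:ℝ)^4)/(m:ℝ)^3 := by field_simp
  have e2 : |(Real.log (1+2*u) + Real.log (1-2*u))/2| ≤ 4*((i:ℝ)-m/2)^2/m^2 := by
    have hprod : Real.log (1+2*u) + Real.log (1-2*u) = Real.log (1 - 4*u^2) := by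
      rw [← Real.log_mul (by rw [abs_le] at hu; nlinarith) (by rw [abs_le] at hu; nlinarith)]
      congr 1; ring
    have hu2 : u^2 ≤ 1/16 := by
      have := abs_le.1 hu
      nlinarith [this.1, this.2]
    have := abs_log_one_sub_le (x := 4*u^2) (by positivity) (by nlinarith)
    have ht : ((i:ℝ)-m/2)^2 = u^2 * (m:ℝ)^2 := by
      rw [hudef]; field_simp
    rw [hprod, ht, abs_div, abs_of_nonneg (by norm_num : (0:ℝ) ≤ 2)]
    calc |Real.log (1-4*u^2)|/2 ≤ (2*(4*u^2))/2 := by gcongr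
      _ = 4*u^2 := by ring
      _ = 4*(u^2*(m:ℝ)^2)/(m:ℝ)^2 := by
          field_simp
  have e3 : |sErr i + sErr (m-i) - sErr m| ≤ 3*δ := by
    have hi : M ≤ i := by omega
    have hmi : M ≤ m - i := by omega
    have hmm : M ≤ m := by omega
    calc |sErr i + sErr (m-i) - sErr m| ≤ |sErr i + sErr (m-i)| + |sErr m| := abs_sub _ _
      _ ≤ |sErr i| + |sErr (m-i)| + |sErr m| := by gcongr; exact abs_add_le _ _
      _ ≤ δ + δ + δ := by gcongr <;> [exact hδ i hi; exact hδ _ hmi; exact hδ m hmm]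
      _ = 3*δ := by ring
  calc |_ + _ + _| ≤ |_ + _| + |sErr i + sErr (m-i) - sErr m| := abs_add_le _ _
    _ ≤ |_| + |_| + |sErr i + sErr (m-i) - sErr m| := by gcongr; exact abs_add_le _ _
    _ ≤ _ := by gcongr

lemma binEnt_eq (m : ℕ) :
    binEnt m = ∑ i ∈ range (m+1), ((m.choose i : ℝ)/2^m) * Gfun m i := by
  rw [binEnt, ← Finset.sum_neg_distrib]
  refine sum_congr rfl fun i hi => ?_
  have him : i ≤ m := Nat.lt_succ_iff.1 (mem_range.1 hi)
  have hC : (0:ℝ) < m.choose i := by exact_mod_cast Nat.choose_pos him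
  rw [Gfun, Real.log_div hC.ne' (by positivity), Real.log_pow]
  push_cast
  ring

lemma sum_p (m : ℕ) : ∑ i ∈ range (m+1), (m.choose i : ℝ)/2^m = 1 := by
  rw [← sum_div, sum_choose_real, div_self (by positivity)]

lemma sum_pt2 (m : ℕ) :
    ∑ i ∈ range (m+1), ((m.choose i : ℝ)/2^m) * ((i:ℝ)-m/2)^2 = (m:ℝ)/4 := by
  have : ∀ i ∈ range (m+1), ((m.choose i : ℝ)/2^m) * ((i:ℝ)-m/2)^2
      = ((m.choose i : ℝ) * (2*(i:ℝ)-(m:ℝ))^2) * ((1:ℝ)/(4*2^m)) := by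
    intro i _; field_simp; ring
  rw [sum_congr rfl this, ← sum_mul, sum_sq]
  field_simp

lemma sum_pt4 (m : ℕ) :
    ∑ i ∈ range (m+1), ((m.choose i : ℝ)/2^m) * ((i:ℝ)-m/2)^4 = (3*(m:ℝ)^2-2*m)/16 := by
  have : ∀ i ∈ range (m+1), ((m.choose i : ℝ)/2^m) * ((i:ℝ)-m/2)^4
      = ((m.choose i : ℝ) * (2*(i:ℝ)-(m:ℝ))^4) * ((1:ℝ)/(16*2^m)) := by
    intro i _; field_simp; ring
  rw [sum_congr rfl this, ← sum_mul, sum_quart]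
  field_simp

lemma bad_est {m i : ℕ} (hm : 1 ≤ m) (him : i ≤ m) (hbad : ¬(m ≤ 4*i ∧ 4*i ≤ 3*m)) :
    |Gfun m i - gApx m i| ≤ 768*((i:ℝ)-m/2)^4/m^3 := by
  have hm0 : (0:ℝ) < m := by exact_mod_cast hm
  have hi0 : (0:ℝ) ≤ i := by positivity
  have hCpos : (0:ℝ) < m.choose i := by exact_mod_cast Nat.choose_pos him
  have hC1 : (1:ℝ) ≤ m.choose i := by exact_mod_cast Nat.choose_pos him
  have hC2 : (m.choose i : ℝ) ≤ 2^m := by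
    rw [← sum_choose_real m]
    exact single_le_sum (f := fun j => (m.choose j : ℝ)) (fun j _ => by positivity)
      (mem_range.2 (Nat.lt_succ_of_le him))
  have hG : |Gfun m i| ≤ (m:ℝ) := by
    rw [Gfun, abs_le]
    have hlog1 : 0 ≤ Real.log (m.choose i) := Real.log_nonneg hC1
    have hlog2 : Real.log (m.choose i) ≤ m * Real.log 2 := by
      calc Real.log (m.choose i) ≤ Real.log (2^m) := Real.log_le_log hCpos hC2
        _ = m * Real.log 2 := by rw [Real.log_pow]
    have hl2 : Real.log 2 ≤ 1 := by
      have := Real.log_le_sub_one_of_pos (by norm_num : (0:ℝ) < 2); linarith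
    constructor
    · nlinarith [Real.log_nonneg (by norm_num : (1:ℝ) ≤ 2)]
    · nlinarith [Real.log_nonneg (by norm_num : (1:ℝ) ≤ 2)]
  have ht2 : ((i:ℝ)-m/2)^2 ≤ (m:ℝ)^2/4 := by
    have : (i:ℝ) ≤ m := by exact_mod_cast him
    nlinarith
  have hgl : 0 < Real.pi * m / 2 := by positivity
  have hg : |gApx m i| ≤ (3/2) * m := by
    rw [gApx, abs_le]
    have hlog : Real.log (Real.pi * m / 2) ≤ 2*m := by
      have h := Real.log_le_sub_one_of_pos hgl
      nlinarith [Real.pi_lt_d2]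
    have hm1' : (1:ℝ) ≤ m := by exact_mod_cast hm
    have hlogpos : 0 ≤ Real.log (Real.pi * m / 2) := by
      apply Real.log_nonneg
      nlinarith [Real.pi_gt_three]
    have h2 : 0 ≤ 2*((i:ℝ)-m/2)^2/m := by positivity
    have h3 : 2*((i:ℝ)-m/2)^2/m ≤ m/2 := by
      rw [div_le_iff₀ hm0]; nlinarith
    constructor <;> nlinarith
  have htbig : (m:ℝ)/4 < |(i:ℝ)-m/2| := by
    rcases Nat.lt_or_ge (4*i) m with h | h
    · have h3 : 4*(i:ℝ) < m := by exact_mod_cast h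
      rw [abs_sub_comm, abs_of_pos (by linarith)]
      linarith
    · have h2 : 3*m < 4*i := by omega
      have h3 : 3*(m:ℝ) < 4*i := by exact_mod_cast h2
      rw [abs_of_pos (by linarith)]
      linarith
  have ht4 : (m:ℝ)^4/256 ≤ ((i:ℝ)-m/2)^4 := by
    have h1 : ((m:ℝ)/4)^2 ≤ ((i:ℝ)-m/2)^2 := by
      rw [← sq_abs ((i:ℝ)-m/2)]
      have h0 : (0:ℝ) ≤ (m:ℝ)/4 := by positivity
      exact pow_le_pow_left₀ h0 htbig.le 2
    calc (m:ℝ)^4/256 = (((m:ℝ)/4)^2)^2 := by ring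
      _ ≤ (((i:ℝ)-m/2)^2)^2 := pow_le_pow_left₀ (by positivity) h1 2
      _ = ((i:ℝ)-m/2)^4 := by ring
  calc |Gfun m i - gApx m i| ≤ |Gfun m i| + |gApx m i| := abs_sub _ _
    _ ≤ (m:ℝ) + (3/2)*m := by gcongr
    _ = (5/2)*m := by ring
    _ ≤ 768*((i:ℝ)-m/2)^4/m^3 := by
        rw [le_div_iff₀ (by positivity)]
        nlinarith [ht4]

lemma binEnt_tendsto :
    Tendsto (fun m : ℕ => binEnt m - Real.log m / 2) atTop
      (nhds (Real.log (Real.pi/2)/2 + 1/2)) := by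
  rw [Metric.tendsto_atTop]
  intro ε hε
  obtain ⟨M0, hM0⟩ := Metric.tendsto_atTop.1 sErr_tendsto (ε/9) (by positivity)
  set M : ℕ := max M0 1 with hMdef
  have hM1 : 1 ≤ M := le_max_right _ _
  have hδ : ∀ k, M ≤ k → |sErr k| ≤ ε/9 := by
    intro k hk
    have := hM0 k (le_trans (le_max_left _ _) hk)
    rw [Real.dist_eq, sub_zero] at this
    linarith
  refine ⟨max (4*M) (⌈(468:ℝ)/ε⌉₊ + 1), fun m hm => ?_⟩
  have hm4M : 4*M ≤ m := le_trans (le_max_left _ _) hm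
  have hm1 : 1 ≤ m := by omega
  have hm0 : (0:ℝ) < m := by exact_mod_cast hm1
  have hmε : (468:ℝ)/ε ≤ m := by
    have h1 : (⌈(468:ℝ)/ε⌉₊ : ℝ) ≤ (max (4*M) (⌈(468:ℝ)/ε⌉₊ + 1) : ℕ) := by
      have : ⌈(468:ℝ)/ε⌉₊ ≤ max (4*M) (⌈(468:ℝ)/ε⌉₊ + 1) := by omega
      exact_mod_cast this
    have h2 : ((max (4*M) (⌈(468:ℝ)/ε⌉₊ + 1) : ℕ) : ℝ) ≤ m := by exact_mod_cast hm
    calc (468:ℝ)/ε ≤ ⌈(468:ℝ)/ε⌉₊ := Nat.le_ceil _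
      _ ≤ m := le_trans h1 h2
  -- rewrite target
  rw [Real.dist_eq]
  have hπm : Real.log (Real.pi * m / 2) = Real.log (Real.pi/2) + Real.log m := by
    rw [show Real.pi * (m:ℝ) / 2 = (Real.pi/2) * m from by ring,
      Real.log_mul (by positivity) hm0.ne']
  have hsplit : binEnt m - Real.log m / 2 - (Real.log (Real.pi/2)/2 + 1/2)
      = ∑ i ∈ range (m+1), ((m.choose i : ℝ)/2^m) * (Gfun m i - gApx m i) := by
    have e1 : ∑ i ∈ range (m+1), ((m.choose i : ℝ)/2^m) * (Gfun m i - gApx m i)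
        = ∑ i ∈ range (m+1), ((m.choose i : ℝ)/2^m) * Gfun m i
          - ∑ i ∈ range (m+1), ((m.choose i : ℝ)/2^m) * gApx m i := by
      rw [← sum_sub_distrib]
      exact sum_congr rfl fun i _ => by ring
    have e2 : ∑ i ∈ range (m+1), ((m.choose i : ℝ)/2^m) * gApx m i
        = Real.log (Real.pi*m/2)/2 + 1/2 := by
      have : ∀ i ∈ range (m+1), ((m.choose i : ℝ)/2^m) * gApx m i
          = ((m.choose i : ℝ)/2^m) * (Real.log (Real.pi*m/2)/2)
            + (((m.choose i : ℝ)/2^m) * ((i:ℝ)-m/2)^2) * (2/m) := by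
        intro i _; rw [gApx]; ring
      rw [sum_congr rfl this, sum_add_distrib, ← sum_mul, ← sum_mul, sum_p, sum_pt2]
      field_simp
      ring
    rw [e1, e2, binEnt_eq, hπm]
    ring
  rw [hsplit]
  -- bound the sum
  have hbound : ∀ i ∈ range (m+1),
      |((m.choose i : ℝ)/2^m) * (Gfun m i - gApx m i)|
        ≤ ((m.choose i : ℝ)/2^m) * (822*((i:ℝ)-m/2)^4/m^3)
          + ((m.choose i : ℝ)/2^m) * (4*((i:ℝ)-m/2)^2/m^2)
          + ((m.choose i : ℝ)/2^m) * (ε/3) := by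
    intro i hi
    have him : i ≤ m := Nat.lt_succ_iff.1 (mem_range.1 hi)
    have hp0 : (0:ℝ) ≤ (m.choose i : ℝ)/2^m := by positivity
    rw [abs_mul, abs_of_nonneg hp0]
    by_cases hgood : m ≤ 4*i ∧ 4*i ≤ 3*m
    · have := good_est hδ hM1 hm4M hgood.1 hgood.2
      have h3 : 3*(ε/9) = ε/3 := by ring
      calc ((m.choose i : ℝ)/2^m) * |Gfun m i - gApx m i|
          ≤ ((m.choose i : ℝ)/2^m) * (54*((i:ℝ)-m/2)^4/m^3 + 4*((i:ℝ)-m/2)^2/m^2 + 3*(ε/9)) := by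
            gcongr
        _ = ((m.choose i : ℝ)/2^m) * (54*((i:ℝ)-m/2)^4/m^3)
              + ((m.choose i : ℝ)/2^m) * (4*((i:ℝ)-m/2)^2/m^2)
              + ((m.choose i : ℝ)/2^m) * (ε/3) := by rw [h3]; ring
        _ ≤ _ := by
            have hq : ((m.choose i : ℝ)/2^m) * (54*((i:ℝ)-m/2)^4/m^3)
                ≤ ((m.choose i : ℝ)/2^m) * (822*((i:ℝ)-m/2)^4/m^3) := by
              gcongr <;> norm_num
            linarith
    · have := bad_est hm1 him hgood
      calc ((m.choose i : ℝ)/2^m) * |Gfun m i - gApx m i|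
          ≤ ((m.choose i : ℝ)/2^m) * (768*((i:ℝ)-m/2)^4/m^3) := by gcongr
        _ ≤ _ := by
            have t1 : (0:ℝ) ≤ ((m.choose i : ℝ)/2^m) * (4*((i:ℝ)-m/2)^2/m^2) := by positivity
            have t2 : (0:ℝ) ≤ ((m.choose i : ℝ)/2^m) * (ε/3) := by positivity
            have t3 : ((m.choose i : ℝ)/2^m) * (768*((i:ℝ)-m/2)^4/m^3)
                ≤ ((m.choose i : ℝ)/2^m) * (822*((i:ℝ)-m/2)^4/m^3) := by
              gcongr <;> norm_num
            linarith
  calc |∑ i ∈ range (m+1), ((m.choose i : ℝ)/2^m) * (Gfun m i - gApx m i)|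
      ≤ ∑ i ∈ range (m+1), |((m.choose i : ℝ)/2^m) * (Gfun m i - gApx m i)| :=
        abs_sum_le_sum_abs _ _
    _ ≤ ∑ i ∈ range (m+1),
          (((m.choose i : ℝ)/2^m) * (822*((i:ℝ)-m/2)^4/m^3)
            + ((m.choose i : ℝ)/2^m) * (4*((i:ℝ)-m/2)^2/m^2)
            + ((m.choose i : ℝ)/2^m) * (ε/3)) := sum_le_sum hbound
    _ = (822/m^3) * ((3*(m:ℝ)^2-2*m)/16) + (4/m^2) * ((m:ℝ)/4) + (ε/3) := by
        rw [sum_add_distrib, sum_add_distrib]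
        congr 1
        congr 1
        · rw [← sum_pt4 m, mul_comm, sum_mul]
          exact sum_congr rfl fun i _ => by ring
        · rw [← sum_pt2 m, mul_comm, sum_mul]
          exact sum_congr rfl fun i _ => by ring
        · rw [← sum_mul, sum_p, one_mul]
    _ < ε := by
        have h1 : (822:ℝ)/m^3 * ((3*(m:ℝ)^2-2*m)/16) ≤ 155/m := by
          have he : (822:ℝ)/m^3 * ((3*(m:ℝ)^2-2*m)/16) = (822*(3*(m:ℝ)^2-2*m))/(16*(m:ℝ)^3) := by
            ring
          rw [he, div_le_div_iff₀ (by positivity) hm0]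
          nlinarith [hm0]
        have h2 : (4:ℝ)/m^2 * ((m:ℝ)/4) = 1/m := by field_simp
        have h3 : (156:ℝ)/m ≤ ε/3 := by
          rw [div_le_div_iff₀ hm0 (by norm_num)]
          have : (468:ℝ) ≤ ε * m := by
            rw [div_le_iff₀ hε] at hmε
            linarith
          linarith
        have h4 : (155:ℝ)/m + 1/m = 156/m := by field_simp; ring
        have h5 : (0:ℝ) < ε/3 := by positivity
        linarith

lemma binEnt_le_log (k : ℕ) : binEnt k ≤ Real.log ((k:ℝ)+1) := by
  rw [binEnt, ← Finset.sum_neg_distrib]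
  have key : ∀ i ∈ range (k+1),
      -(((k.choose i : ℝ)/2^k) * Real.log ((k.choose i : ℝ)/2^k))
        ≤ ((k.choose i : ℝ)/2^k) * Real.log ((k:ℝ)+1) + (1/((k:ℝ)+1) - (k.choose i : ℝ)/2^k) := by
    intro i hi
    have him : i ≤ k := Nat.lt_succ_iff.1 (mem_range.1 hi)
    have hp : (0:ℝ) < (k.choose i : ℝ)/2^k := by
      have : (0:ℝ) < k.choose i := by exact_mod_cast Nat.choose_pos him
      positivity
    set p : ℝ := (k.choose i : ℝ)/2^k with hpdef
    have hlog : Real.log (1/(((k:ℝ)+1) * p)) ≤ 1/(((k:ℝ)+1)*p) - 1 :=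
      Real.log_le_sub_one_of_pos (by positivity)
    have hexp : Real.log (1/(((k:ℝ)+1) * p)) = -Real.log ((k:ℝ)+1) - Real.log p := by
      rw [one_div, Real.log_inv, Real.log_mul (by positivity) hp.ne']
      ring
    rw [hexp] at hlog
    have h2 := mul_le_mul_of_nonneg_left hlog hp.le
    have hcancel : p * (1/(((k:ℝ)+1)*p) - 1) = 1/((k:ℝ)+1) - p := by
      field_simp
    rw [hcancel] at h2
    have h3 : -(p * Real.log p) = p * (-Real.log ((k:ℝ)+1) - Real.log p) + p * Real.log ((k:ℝ)+1) := by
      ring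
    linarith
  calc ∑ i ∈ range (k+1), -(((k.choose i : ℝ)/2^k) * Real.log ((k.choose i : ℝ)/2^k))
      ≤ ∑ i ∈ range (k+1),
          (((k.choose i : ℝ)/2^k) * Real.log ((k:ℝ)+1) + (1/((k:ℝ)+1) - (k.choose i : ℝ)/2^k)) :=
        sum_le_sum key
    _ = Real.log ((k:ℝ)+1) := by
        rw [sum_add_distrib, ← sum_mul, sum_p, sum_sub_distrib, sum_const, card_range, sum_p]
        simp
        field_simp
        norm_num

/-- For every `ε > 0` there is `m₀` such that for all `m ≥ m₀` and all
`Δ ∈ {1, …, m−1}`, we have `2·h_m − h_Δ − h_{m−Δ}` ≥ `ln 2 − ε`. -/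
theorem stmt_3 :
    ∀ ε : ℝ, 0 < ε → ∃ m₀ : ℕ, 0 < m₀ ∧
      ∀ m : ℕ, m₀ ≤ m → ∀ Δ : ℕ, 1 ≤ Δ → Δ ≤ m - 1 →
        2 * binEnt m - binEnt Δ - binEnt (m - Δ) ≥ Real.log 2 - ε := by
  intro ε hε
  obtain ⟨c, hc⟩ : ∃ c : ℝ, c = Real.log (Real.pi/2)/2 + 1/2 := ⟨_, rfl⟩
  obtain ⟨T0, hT0⟩ := Metric.tendsto_atTop.1 binEnt_tendsto (ε/4) (by positivity)
  set T : ℕ := max T0 1 with hT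
  have hT1 : 1 ≤ T := le_max_right _ _
  have hd : ∀ k, T ≤ k → |binEnt k - Real.log k / 2 - c| ≤ ε/4 := by
    intro k hk
    have := hT0 k (le_trans (le_max_left _ _) hk)
    rw [Real.dist_eq] at this
    rw [hc]
    exact this.le
  obtain ⟨B, hB⟩ : ∃ B : ℝ, B = Real.log ((T:ℝ)+1) := ⟨_, rfl⟩
  obtain ⟨E, hE⟩ : ∃ E : ℝ, E = Real.exp (2*(Real.log 2 + B - c)) := ⟨_, rfl⟩
  refine ⟨max (2*T) (⌈E⌉₊ + 1), by positivity, fun m hm Δ hΔ1 hΔm => ?_⟩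
  have hm2T : 2*T ≤ m := le_trans (le_max_left _ _) hm
  have hmE : E ≤ m := by
    have h1 : (⌈E⌉₊ : ℝ) ≤ m := by
      have : ⌈E⌉₊ ≤ m := by
        have := le_trans (le_max_right (2*T) (⌈E⌉₊ + 1)) hm; omega
      exact_mod_cast this
    exact le_trans (Nat.le_ceil E) h1
  have hm1 : 1 ≤ m := by omega
  have hΔm' : Δ + 1 ≤ m := by omega
  have hb1 : 1 ≤ m - Δ := by omega
  have hmT : T ≤ m := by omega
  have hdm := hd m hmT
  have hm0 : (0:ℝ) < m := by exact_mod_cast hm1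
  have hlogm : 2*(Real.log 2 + B - c) ≤ Real.log m := by
    calc 2*(Real.log 2 + B - c) = Real.log E := by rw [hE, Real.log_exp]
      _ ≤ Real.log m := Real.log_le_log (hE ▸ Real.exp_pos _) hmE
  -- helper for the unbalanced case
  have helper : ∀ k : ℕ, 1 ≤ k → k < T → k ≤ m - 1 →
      2 * binEnt m - binEnt k - binEnt (m - k) ≥ Real.log 2 - ε := by
    intro k hk1 hkT hkm
    have hbk : T ≤ m - k := by omega
    have hdb := hd (m-k) hbk
    have hbpos : (0:ℝ) < ((m-k:ℕ):ℝ) := by exact_mod_cast (by omega : 1 ≤ m - k)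
    have hBk : binEnt k ≤ B := by
      calc binEnt k ≤ Real.log ((k:ℝ)+1) := binEnt_le_log k
        _ ≤ B := by
            rw [hB]
            apply Real.log_le_log (by positivity)
            have : (k:ℝ) ≤ T := by exact_mod_cast hkT.le
            linarith
    have hlogb : Real.log ((m-k:ℕ):ℝ) ≤ Real.log m := by
      apply Real.log_le_log hbpos
      have : ((m-k:ℕ):ℝ) ≤ m := by exact_mod_cast Nat.sub_le m k
      exact this
    have e1 : binEnt m ≥ Real.log m / 2 + c - ε/4 := by
      have := abs_le.1 hdm; linarith [this.1]
    have e2 : binEnt (m-k) ≤ Real.log ((m-k:ℕ):ℝ) / 2 + c + ε/4 := by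
      have := abs_le.1 hdb; linarith [this.1, this.2]
    have : 2 * binEnt m - binEnt k - binEnt (m-k)
        ≥ Real.log m - (Real.log ((m-k:ℕ):ℝ))/2 + c - (3/4)*ε - B := by
      linarith
    have h2 : Real.log m - (Real.log ((m-k:ℕ):ℝ))/2 ≥ Real.log m / 2 := by linarith
    have h3 : Real.log m / 2 ≥ Real.log 2 + B - c := by linarith
    linarith
  by_cases hcase : T ≤ Δ ∧ T ≤ m - Δ
  · -- balanced case
    obtain ⟨hTΔ, hTb⟩ := hcase
    have hdΔ := hd Δ hTΔ
    have hdb := hd (m-Δ) hTb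
    have hΔ0 : (0:ℝ) < (Δ:ℝ) := by exact_mod_cast hΔ1
    have hb0 : (0:ℝ) < ((m-Δ:ℕ):ℝ) := by exact_mod_cast hb1
    have hsum : (Δ:ℝ) + ((m-Δ:ℕ):ℝ) = m := by
      push_cast [Nat.le_of_succ_le hΔm']
      ring
    have hprod : (Δ:ℝ) * ((m-Δ:ℕ):ℝ) ≤ (m:ℝ)^2/4 := by
      nlinarith [sq_nonneg ((Δ:ℝ) - ((m-Δ:ℕ):ℝ))]
    have hlogs : Real.log (Δ:ℝ) + Real.log ((m-Δ:ℕ):ℝ) ≤ 2*Real.log m - 2*Real.log 2 := by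
      have h1 : Real.log ((Δ:ℝ) * ((m-Δ:ℕ):ℝ)) ≤ Real.log ((m:ℝ)^2/4) :=
        Real.log_le_log (by positivity) hprod
      rw [Real.log_mul hΔ0.ne' hb0.ne'] at h1
      have h2 : Real.log ((m:ℝ)^2/4) = 2*Real.log m - 2*Real.log 2 := by
        rw [Real.log_div (by positivity) (by norm_num), Real.log_pow,
          show (4:ℝ) = 2^2 from by norm_num, Real.log_pow]
        push_cast
        ring
      linarith
    have e1 : binEnt m ≥ Real.log m / 2 + c - ε/4 := by
      have := abs_le.1 hdm; linarith [this.1]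
    have e2 : binEnt Δ ≤ Real.log (Δ:ℝ) / 2 + c + ε/4 := by
      have := abs_le.1 hdΔ; linarith [this.2]
    have e3 : binEnt (m-Δ) ≤ Real.log ((m-Δ:ℕ):ℝ) / 2 + c + ε/4 := by
      have := abs_le.1 hdb; linarith [this.2]
    linarith
  · -- unbalanced case
    rw [not_and_or] at hcase
    rcases hcase with h | h
    · exact helper Δ hΔ1 (by omega) hΔm
    · have hbT : m - Δ < T := by omega
      have hsub : m - (m - Δ) = Δ := by omega
      have := helper (m-Δ) hb1 hbT (by omega)
      rw [hsub] at this
      linarith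

end BinEntProof
end

section
/- There is an absolute constant C > 0 such that for every ε ∈ (0, 1/4], every positive integer k, and every random variable Y taking values in {0, 1, …, k} with E[Y] ≤ ε·k, one has E[log₂ binom(k, Y)] ≤ C·ε·log₂(1/ε)·k. -/
open MeasureTheory

lemma key_pointwise (ε : ℝ) (hε0 : 0 < ε) (hε : ε ≤ 1 / 4) (k : ℕ) (hk : 0 < k)
    (y : ℕ) (hy : y ≤ k) :
    Real.logb 2 (k.choose y) ≤
      ε * k * Real.logb 2 (1 / ε) + 2 * Real.logb 2 (1 / ε) * y := by
  set L := Real.logb 2 (1 / ε) with hLdef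
  have hL4 : Real.logb 2 (4 : ℝ) = 2 := by
    rw [show (4 : ℝ) = 2 ^ (2 : ℕ) by norm_num, Real.logb_pow,
      Real.logb_self_eq_one (by norm_num)]
    norm_num
  have hL2 : 2 ≤ L := by
    rw [← hL4, hLdef]
    exact Real.logb_le_logb_of_le (by norm_num) (by norm_num)
      (by rw [le_div_iff₀ hε0]; linarith)
  have hLpos : 0 < L := by linarith
  have hkpos : (0 : ℝ) < k := by exact_mod_cast hk
  rcases Nat.eq_zero_or_pos y with rfl | hy1
  · simp only [Nat.choose_zero_right, Nat.cast_one, Real.logb_one, Nat.cast_zero]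
    positivity
  -- y ≥ 1
  have hyr : (0 : ℝ) < y := by exact_mod_cast hy1
  have hyk : (y : ℝ) ≤ k := by exact_mod_cast hy
  -- Step A : choose k y ≤ (e * k / y) ^ y
  have hfac : (y : ℝ) ^ y / (y.factorial : ℝ) ≤ Real.exp 1 ^ y := by
    rw [← Real.exp_nat_mul, mul_one]
    exact Real.pow_div_factorial_le_exp _ (le_of_lt hyr) y
  have hA : (k.choose y : ℝ) ≤ (Real.exp 1 * k / y) ^ y := by
    have h1 : (k.choose y : ℝ) ≤ (k : ℝ) ^ y / (y.factorial : ℝ) := by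
      exact_mod_cast Nat.choose_le_pow_div y k
    have h2 : (k : ℝ) ^ y / (y.factorial : ℝ) ≤ (Real.exp 1 * k / y) ^ y := by
      have hfacpos : (0 : ℝ) < (y.factorial : ℝ) := by exact_mod_cast Nat.factorial_pos y
      rw [div_le_iff₀ hfacpos, div_pow, mul_pow, div_mul_eq_mul_div,
        le_div_iff₀ (by positivity)]
      calc (k : ℝ) ^ y * (y : ℝ) ^ y ≤ (k : ℝ) ^ y * (Real.exp 1 ^ y * (y.factorial : ℝ)) := by
            apply mul_le_mul_of_nonneg_left _ (by positivity)
            rw [← div_le_iff₀ hfacpos] at *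
            exact hfac
        _ = Real.exp 1 ^ y * (k : ℝ) ^ y * (y.factorial : ℝ) := by ring
    exact h1.trans h2
  have hchoosepos : (0 : ℝ) < (k.choose y : ℝ) := by
    exact_mod_cast Nat.choose_pos hy
  have hlogA : Real.logb 2 (k.choose y) ≤ (y : ℝ) * Real.logb 2 (Real.exp 1 * k / y) := by
    calc Real.logb 2 (k.choose y) ≤ Real.logb 2 ((Real.exp 1 * k / y) ^ y) :=
          Real.logb_le_logb_of_le (by norm_num) hchoosepos hA
      _ = (y : ℝ) * Real.logb 2 (Real.exp 1 * k / y) := by rw [Real.logb_pow]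
  -- split e*k/y = (e/ε) * (ε*k/y)
  have hεne : ε ≠ 0 := ne_of_gt hε0
  have hsplit : Real.exp 1 * k / y = (Real.exp 1 / ε) * (ε * k / y) := by
    field_simp
  have hlogsplit : Real.logb 2 (Real.exp 1 * k / y)
      = Real.logb 2 (Real.exp 1 / ε) + Real.logb 2 (ε * k / y) := by
    rw [hsplit, Real.logb_mul (by positivity) (by positivity)]
  have hloge : Real.logb 2 (Real.exp 1 / ε) ≤ 2 * L := by
    have : Real.logb 2 (Real.exp 1 / ε) = Real.logb 2 (Real.exp 1) + L := by
      rw [hLdef, div_eq_mul_one_div, Real.logb_mul (by positivity) (by positivity)]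
    rw [this]
    have he4 : Real.logb 2 (Real.exp 1) ≤ 2 := by
      have h4 : Real.exp 1 ≤ 4 :=
        le_of_lt (lt_trans Real.exp_one_lt_d9 (by norm_num))
      have := Real.logb_le_logb_of_le (b := 2) (by norm_num) (Real.exp_pos 1) h4
      rw [hL4] at this
      exact this
    linarith
  rcases le_or_gt (ε * k) (y : ℝ) with hcase | hcase
  · -- y ≥ εk : second log term ≤ 0
    have h2 : Real.logb 2 (ε * k / y) ≤ 0 := by
      have hxle1 : ε * k / (y : ℝ) ≤ 1 := by
        rw [div_le_one hyr]; exact hcase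
      exact Real.logb_nonpos (b := 2) (by norm_num) (by positivity) hxle1
    have : Real.logb 2 (k.choose y) ≤ (y : ℝ) * (2 * L) := by
      calc Real.logb 2 (k.choose y) ≤ (y : ℝ) * Real.logb 2 (Real.exp 1 * k / y) := hlogA
        _ ≤ (y : ℝ) * (2 * L) := by
            rw [hlogsplit]
            apply mul_le_mul_of_nonneg_left _ (le_of_lt hyr)
            linarith
    nlinarith [mul_pos (mul_pos hε0 hkpos) hLpos]
  · -- y < εk
    have h2 : (y : ℝ) * Real.logb 2 (ε * k / y) ≤ ε * k * L := by
      have hln : Real.log (ε * k / y) ≤ ε * k / y - 1 :=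
        Real.log_le_sub_one_of_pos (by positivity)
      have hln2 : (y : ℝ) * Real.log (ε * k / y) ≤ ε * k := by
        have := mul_le_mul_of_nonneg_left hln (le_of_lt hyr)
        have heq : (y : ℝ) * (ε * k / y - 1) = ε * k - y := by field_simp
        nlinarith
      have hlog2pos : (0 : ℝ) < Real.log 2 := Real.log_pos (by norm_num)
      have hlog2half : (1 : ℝ) / 2 ≤ Real.log 2 := by
        nlinarith [Real.log_two_gt_d9]
      have : (y : ℝ) * Real.logb 2 (ε * k / y) = (y : ℝ) * Real.log (ε * k / y) / Real.log 2 := by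
        rw [Real.logb]; ring
      rw [this, div_le_iff₀ hlog2pos]
      calc (y : ℝ) * Real.log (ε * k / y) ≤ ε * k := hln2
        _ ≤ ε * k * L * (1 / 2) := by nlinarith
        _ ≤ ε * k * L * Real.log 2 := by
            apply mul_le_mul_of_nonneg_left hlog2half (by positivity)
    calc Real.logb 2 (k.choose y)
        ≤ (y : ℝ) * Real.logb 2 (Real.exp 1 * k / y) := hlogA
      _ = (y : ℝ) * Real.logb 2 (Real.exp 1 / ε) + (y : ℝ) * Real.logb 2 (ε * k / y) := by
          rw [hlogsplit]; ring
      _ ≤ (y : ℝ) * (2 * L) + ε * k * L := by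
          have := mul_le_mul_of_nonneg_left hloge (le_of_lt hyr)
          linarith
      _ = ε * k * L + 2 * L * y := by ring

/-- There is an absolute constant `C > 0` such that for every `ε ∈ (0, 1/4]`, every
positive integer `k`, and every random variable `Y` taking values in `{0, 1, …, k}` with
`E[Y] ≤ ε·k`, one has `E[log₂ binom(k, Y)] ≤ C·ε·log₂(1/ε)·k`. -/
theorem stmt_8 :
    ∃ C : ℝ, 0 < C ∧
      ∀ ε : ℝ, 0 < ε → ε ≤ 1 / 4 →
      ∀ k : ℕ, 0 < k →
      ∀ (Ω : Type) (_ : MeasurableSpace Ω) (μ : Measure Ω),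
        IsProbabilityMeasure μ →
        ∀ Y : Ω → ℕ, Measurable Y → (∀ ω, Y ω ≤ k) →
          (∫ ω, (Y ω : ℝ) ∂μ) ≤ ε * k →
          (∫ ω, Real.logb 2 (k.choose (Y ω)) ∂μ) ≤ C * ε * Real.logb 2 (1 / ε) * k := by
  refine ⟨3, by norm_num, fun ε hε0 hε k hk Ω mΩ μ hμ Y hY hYk hEY => ?_⟩
  set L := Real.logb 2 (1 / ε) with hLdef
  have hL4 : Real.logb 2 (4 : ℝ) = 2 := by
    rw [show (4 : ℝ) = 2 ^ (2 : ℕ) by norm_num, Real.logb_pow,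
      Real.logb_self_eq_one (by norm_num)]
    norm_num
  have hL2 : 2 ≤ L := by
    rw [← hL4, hLdef]
    exact Real.logb_le_logb_of_le (by norm_num) (by norm_num)
      (by rw [le_div_iff₀ hε0]; linarith)
  have hLpos : 0 < L := by linarith
  have hkpos : (0 : ℝ) < k := by exact_mod_cast hk
  -- measurability / integrability
  have hfmeas : Measurable (fun ω => Real.logb 2 (k.choose (Y ω))) :=
    (Measurable.of_discrete (f := fun n : ℕ => Real.logb 2 (k.choose n))).comp hY
  have hYmeas : Measurable (fun ω => (Y ω : ℝ)) :=
    (Measurable.of_discrete (f := fun n : ℕ => (n : ℝ))).comp hY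
  have hYint : Integrable (fun ω => (Y ω : ℝ)) μ := by
    apply Integrable.mono' (integrable_const (k : ℝ)) hYmeas.aestronglyMeasurable
    filter_upwards with ω
    rw [Real.norm_eq_abs, abs_of_nonneg (by positivity)]
    exact_mod_cast hYk ω
  have hfnonneg : ∀ ω, 0 ≤ Real.logb 2 (k.choose (Y ω)) := by
    intro ω
    apply Real.logb_nonneg (by norm_num)
    exact_mod_cast Nat.one_le_iff_ne_zero.mpr (Nat.choose_pos (hYk ω)).ne'
  have hptwise : ∀ ω, Real.logb 2 (k.choose (Y ω)) ≤ ε * k * L + 2 * L * (Y ω : ℝ) :=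
    fun ω => key_pointwise ε hε0 hε k hk (Y ω) (hYk ω)
  have hfint : Integrable (fun ω => Real.logb 2 (k.choose (Y ω))) μ := by
    apply Integrable.mono' (integrable_const (ε * k * L + 2 * L * k))
      hfmeas.aestronglyMeasurable
    filter_upwards with ω
    rw [Real.norm_eq_abs, abs_of_nonneg (hfnonneg ω)]
    have h1 := hptwise ω
    have h2 : (Y ω : ℝ) ≤ k := by exact_mod_cast hYk ω
    nlinarith
  have hgint : Integrable (fun ω => ε * k * L + 2 * L * (Y ω : ℝ)) μ :=
    (integrable_const _).add (hYint.const_mul _)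
  calc (∫ ω, Real.logb 2 (k.choose (Y ω)) ∂μ)
      ≤ ∫ ω, (ε * k * L + 2 * L * (Y ω : ℝ)) ∂μ :=
        integral_mono hfint hgint hptwise
    _ = ε * k * L + 2 * L * ∫ ω, (Y ω : ℝ) ∂μ := by
        rw [integral_add (integrable_const _) (hYint.const_mul _),
          integral_const, integral_const_mul]
        simp
    _ ≤ ε * k * L + 2 * L * (ε * k) := by
        have := mul_le_mul_of_nonneg_left hEY (by positivity : (0:ℝ) ≤ 2 * L)
        linarith
    _ = 3 * ε * L * k := by ring
end

section
/- For all a ∈ (0, 1] and p ∈ (0, 1] there exist ε > 0 and c > 0 such that the following holds for every positive integer r. Let Z₁, …, Z_r be independent nonnegative real-valued random variables with Pr[Z_i ≥ a] ≥ p for every i. Then for every event E with Pr[E] ≥ 2^{−ε·r}, the conditional expectation satisfies E[Σ_{i=1}^r Z_i | E] ≥ c·r. -/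
open MeasureTheory ProbabilityTheory

set_option maxHeartbeats 1600000

/-- For all `a ∈ (0,1]` and `p ∈ (0,1]` there are `ε > 0` and `c > 0` such that for all
`r`: if `Z₁, …, Z_r` are independent nonnegative random variables with
`Pr[Z_i ≥ a] ≥ p` for every `i`, then for every event `E` with `Pr[E] ≥ 2^{−ε·r}` the
conditional expectation satisfies `E[∑ᵢ Z_i | E] ≥ c·r`. -/
theorem stmt_11 (a p : ℝ) (ha0 : 0 < a) (ha1 : a ≤ 1) (hp0 : 0 < p) (hp1 : p ≤ 1) :
    ∃ ε : ℝ, 0 < ε ∧ ∃ c : ℝ, 0 < c ∧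
      ∀ r : ℕ, 0 < r →
      ∀ (Ω : Type) (_ : MeasurableSpace Ω) (μ : Measure Ω),
        IsProbabilityMeasure μ →
      ∀ Z : Fin r → Ω → ℝ,
        (∀ i, Measurable (Z i)) →
        (∀ i ω, 0 ≤ Z i ω) →
        iIndepFun Z μ →
        (∀ i, ENNReal.ofReal p ≤ μ {ω | a ≤ Z i ω}) →
        ∀ E : Set Ω, MeasurableSet E →
          ENNReal.ofReal ((2 : ℝ) ^ (-(ε * r))) ≤ μ E →
          ENNReal.ofReal (c * r) ≤
            (∫⁻ ω in E, ENNReal.ofReal (∑ i, Z i ω) ∂μ) / μ E := by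
  have hlog2 : 0 < Real.log 2 := Real.log_pos one_lt_two
  have hlog2le : Real.log 2 ≤ 1 := by
    have h9 := Real.log_two_lt_d9
    linarith
  have he1 : 0 < 1 - Real.exp (-1) := by
    have : Real.exp (-1) < 1 := Real.exp_lt_one_iff.mpr (by norm_num)
    linarith
  have he1le : 1 - Real.exp (-1) ≤ 1 := by
    have := Real.exp_pos (-1); linarith
  set δ : ℝ := p * (1 - Real.exp (-1)) / 2 with hδdef
  have hδ : 0 < δ := by positivity
  have hδp : 2 * δ ≤ p := by nlinarith
  set ε : ℝ := min (δ / (2 * Real.log 2)) (p * δ / (4 * Real.log 2)) with hεdef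
  have hε : 0 < ε := lt_min (by positivity) (by positivity)
  set c : ℝ := a * δ / 2 with hcdef
  have hc : 0 < c := by positivity
  refine ⟨ε, hε, c, hc, ?_⟩
  intro r hr Ω mΩ μ hμ Z hZm hZ0 hZind hZp E hEmeas hμE
  have hrr : (0:ℝ) < r := by exact_mod_cast hr
  set Y : Fin r → Ω → ℝ := fun i ω => min (Z i ω) a with hYdef
  have hYm : ∀ i, Measurable (Y i) := fun i => (hZm i).min measurable_const
  have hY0 : ∀ i ω, 0 ≤ Y i ω := fun i ω => le_min (hZ0 i ω) ha0.le
  have hYa : ∀ i ω, Y i ω ≤ a := fun i ω => min_le_right _ _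
  have hYZ : ∀ i ω, Y i ω ≤ Z i ω := fun i ω => min_le_left _ _
  set W : Ω → ℝ := fun ω => ∑ i, Y i ω with hWdef
  have hWapp : ∀ ω, (∑ i, Y i) ω = W ω := fun ω => by
    simp [hWdef, Finset.sum_apply]
  have hWm : Measurable W := Finset.measurable_sum _ fun i _ => hYm i
  have hW0 : ∀ ω, 0 ≤ W ω := fun ω => Finset.sum_nonneg fun i _ => hY0 i ω
  have hWra : ∀ ω, W ω ≤ r * a := by
    intro ω
    calc W ω ≤ ∑ _i : Fin r, a := Finset.sum_le_sum fun i _ => hYa i ω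
    _ = r * a := by simp [Finset.sum_const, nsmul_eq_mul]
  have hWZ : ∀ ω, W ω ≤ ∑ i, Z i ω := fun ω => Finset.sum_le_sum fun i _ => hYZ i ω
  have hμE0 : μ E ≠ 0 := by
    intro h0
    rw [h0, le_zero_iff, ENNReal.ofReal_eq_zero] at hμE
    have : (0:ℝ) < (2:ℝ) ^ (-(ε*(r:ℝ))) := Real.rpow_pos_of_pos two_pos _
    linarith
  have hμEtop : μ E ≠ ⊤ := measure_ne_top μ E
  have hμE1 : μ E ≤ 1 := prob_le_one
  rw [ENNReal.le_div_iff_mul_le (Or.inl hμE0) (Or.inl hμEtop)]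
  by_cases hr2 : 2 * Real.log 2 / δ ≤ (r : ℝ)
  · -- Chernoff case
    set t : ℝ := -1/a with htdef
    have ht0 : t ≤ 0 := by
      rw [htdef]
      exact le_of_lt (div_neg_of_neg_of_pos (by norm_num) ha0)
    have hYind : iIndepFun Y μ :=
      hZind.comp (fun _ (x:ℝ) => min x a) (fun _ => measurable_id.min measurable_const)
    have hint : ∀ i, Integrable (fun ω => Real.exp (t * Y i ω)) μ := by
      intro i
      refine ⟨(((hYm i).const_mul t).exp).aestronglyMeasurable, ?_⟩
      apply HasFiniteIntegral.of_bounded (C := (1:ℝ))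
      filter_upwards with ω
      rw [Real.norm_eq_abs, abs_of_pos (Real.exp_pos _)]
      rw [Real.exp_le_one_iff]
      exact mul_nonpos_of_nonpos_of_nonneg ht0 (hY0 i ω)
    have hYint : ∀ i, Integrable (Y i) μ := by
      intro i
      refine ⟨(hYm i).aestronglyMeasurable, ?_⟩
      apply HasFiniteIntegral.of_bounded (C := a)
      filter_upwards with ω
      rw [Real.norm_eq_abs, abs_of_nonneg (hY0 i ω)]
      exact hYa i ω
    have hEY : ∀ i, a * p ≤ ∫ ω, Y i ω ∂μ := by
      intro i
      have hA : MeasurableSet {ω | a ≤ Z i ω} := measurableSet_le measurable_const (hZm i)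
      have hptoReal : p ≤ (μ {ω | a ≤ Z i ω}).toReal :=
        (ENNReal.ofReal_le_iff_le_toReal (measure_ne_top μ _)).mp (hZp i)
      calc a * p ≤ a * (μ {ω | a ≤ Z i ω}).toReal := by
            exact mul_le_mul_of_nonneg_left hptoReal ha0.le
      _ = ∫ _ω in {ω | a ≤ Z i ω}, a ∂μ := by
            rw [setIntegral_const, smul_eq_mul, mul_comm]; rfl
      _ ≤ ∫ ω in {ω | a ≤ Z i ω}, Y i ω ∂μ := by
            apply setIntegral_mono_on ((integrable_const a).integrableOn)
              ((hYint i).integrableOn) hA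
            intro ω hω
            exact le_min hω le_rfl
      _ ≤ ∫ ω, Y i ω ∂μ := setIntegral_le_integral (hYint i) (ae_of_all _ fun ω => hY0 i ω)
    have hmgf : ∀ i, mgf (Y i) μ t ≤ Real.exp (-(2*δ)) := by
      intro i
      have hpt : ∀ ω, Real.exp (t * Y i ω) ≤ 1 - (1 - Real.exp (-1)) / a * Y i ω := by
        intro ω
        set u : ℝ := Y i ω / a with hu
        have hu0 : 0 ≤ u := div_nonneg (hY0 i ω) ha0.le
        have hu1 : u ≤ 1 := (div_le_one ha0).mpr (hYa i ω)
        have hconv : Real.exp ((1-u) • (0:ℝ) + u • (-1:ℝ)) ≤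
            (1-u) • Real.exp 0 + u • Real.exp (-1) :=
          convexOn_exp.2 (Set.mem_univ _) (Set.mem_univ _) (by linarith) hu0 (by ring)
        simp only [smul_eq_mul, mul_zero, mul_neg_one, zero_add, Real.exp_zero, mul_one] at hconv
        have htY : t * Y i ω = -u := by
          rw [htdef, hu]; field_simp
        have harr : (1 - Real.exp (-1)) / a * Y i ω = (1 - Real.exp (-1)) * u := by
          rw [hu]; field_simp
        rw [htY, harr]
        nlinarith [hconv]
      have hintg : Integrable (fun ω => 1 - (1 - Real.exp (-1)) / a * Y i ω) μ :=
        (integrable_const (1:ℝ)).sub ((hYint i).const_mul _)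
      calc mgf (Y i) μ t = ∫ ω, Real.exp (t * Y i ω) ∂μ := rfl
      _ ≤ ∫ ω, (1 - (1 - Real.exp (-1)) / a * Y i ω) ∂μ :=
            integral_mono (hint i) hintg hpt
      _ = 1 - (1 - Real.exp (-1)) / a * ∫ ω, Y i ω ∂μ := by
            rw [integral_sub (integrable_const _) ((hYint i).const_mul _),
              integral_const_mul, integral_const]
            simp
      _ ≤ 1 - 2*δ := by
            have h1 : (1 - Real.exp (-1)) / a * (a * p) ≤
                (1 - Real.exp (-1)) / a * ∫ ω, Y i ω ∂μ :=
              mul_le_mul_of_nonneg_left (hEY i) (by positivity)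
            have h2 : (1 - Real.exp (-1)) / a * (a * p) = 2*δ := by
              rw [hδdef]; field_simp
            linarith
      _ ≤ Real.exp (-(2*δ)) := by
            have := Real.add_one_le_exp (-(2*δ)); linarith
    have hintW : Integrable (fun ω => Real.exp (t * (∑ i, Y i) ω)) μ := by
      refine ⟨((hWm.const_mul t).exp).aestronglyMeasurable.congr ?_, ?_⟩
      · filter_upwards with ω
        rw [hWapp ω]
      apply HasFiniteIntegral.of_bounded (C := (1:ℝ))
      filter_upwards with ω
      rw [Real.norm_eq_abs, abs_of_pos (Real.exp_pos _), Real.exp_le_one_iff, hWapp ω]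
      exact mul_nonpos_of_nonpos_of_nonneg ht0 (hW0 ω)
    set s₀ : ℝ := δ * a * r with hs₀def
    have hcher := measure_le_le_exp_mul_mgf (μ := μ) (X := ∑ i, Y i) s₀ ht0 hintW
    have hmgfsum : mgf (∑ i, Y i) μ t ≤ Real.exp (-(2*δ*r)) := by
      rw [hYind.mgf_sum hYm Finset.univ]
      calc ∏ i, mgf (Y i) μ t ≤ ∏ _i : Fin r, Real.exp (-(2*δ)) :=
            Finset.prod_le_prod (fun i _ => mgf_nonneg) (fun i _ => hmgf i)
      _ = Real.exp (-(2*δ)) ^ r := by simp [Finset.prod_const]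
      _ = Real.exp (-(2*δ*r)) := by
            rw [← Real.exp_nat_mul]; ring_nf
    have hcher2 : (μ {ω | (∑ i, Y i) ω ≤ s₀}).toReal ≤ Real.exp (-(δ*r)) := by
      have hts : -t * s₀ = δ * r := by
        rw [htdef, hs₀def]; field_simp
      calc (μ {ω | (∑ i, Y i) ω ≤ s₀}).toReal
          ≤ Real.exp (-t * s₀) * mgf (∑ i, Y i) μ t := hcher
      _ ≤ Real.exp (δ * r) * Real.exp (-(2*δ*r)) := by
            rw [hts]
            exact mul_le_mul_of_nonneg_left hmgfsum (Real.exp_pos _).le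
      _ = Real.exp (-(δ*r)) := by
            rw [← Real.exp_add]; ring_nf
    set B : Set Ω := {ω | (∑ i, Y i) ω ≤ s₀} with hBdef
    have hBmeas : MeasurableSet B := by
      have : B = {ω | W ω ≤ s₀} := by
        ext ω; simp [hBdef, hWapp ω]; rfl
      rw [this]
      exact measurableSet_le hWm measurable_const
    have hμB : μ B ≤ ENNReal.ofReal (Real.exp (-(δ*r))) := by
      rw [← ENNReal.ofReal_toReal (measure_ne_top μ B)]
      exact ENNReal.ofReal_le_ofReal hcher2
    have hreal : Real.exp (-(δ*r)) ≤ (2:ℝ)^(-(ε*(r:ℝ))) / 2 := by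
      have h2r : (2:ℝ)^(-(ε*(r:ℝ))) = Real.exp (Real.log 2 * (-(ε*r))) :=
        Real.rpow_def_of_pos two_pos _
      have hεδ : ε ≤ δ / (2 * Real.log 2) := min_le_left _ _
      have hh : ε * Real.log 2 ≤ δ/2 := by
        have h0 : ε * (2 * Real.log 2) ≤ δ := by
          rw [← le_div_iff₀ (by positivity : (0:ℝ) < 2 * Real.log 2)]
          exact hεδ
        nlinarith
      have h1 : Real.log 2 * (ε*r) ≤ δ/2 * r := by
        calc Real.log 2 * (ε*r) = (ε * Real.log 2) * r := by ring
        _ ≤ δ/2 * r := mul_le_mul_of_nonneg_right hh hrr.le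
      have h2 : Real.exp (-(δ/2*r)) ≤ Real.exp (Real.log 2 * (-(ε*r))) := by
        apply Real.exp_le_exp.mpr; linarith [h1]
      have h3 : (2:ℝ) ≤ Real.exp (δ/2*r) := by
        calc (2:ℝ) = Real.exp (Real.log 2) := (Real.exp_log two_pos).symm
        _ ≤ Real.exp (δ/2*r) := by
              apply Real.exp_le_exp.mpr
              rw [div_le_iff₀ hδ] at hr2
              linarith
      have h4 : Real.exp (-(δ*r)) * 2 ≤ Real.exp (-(δ/2*r)) := by
        have : Real.exp (-(δ/2*r)) = Real.exp (-(δ*r)) * Real.exp (δ/2*r) := by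
          rw [← Real.exp_add]; ring_nf
        rw [this]
        exact mul_le_mul_of_nonneg_left h3 (Real.exp_pos _).le
      rw [h2r, le_div_iff₀ (by norm_num : (0:ℝ) < 2)]
      linarith
    have hhalf : μ B ≤ μ E / 2 := by
      calc μ B ≤ ENNReal.ofReal (Real.exp (-(δ*r))) := hμB
      _ ≤ ENNReal.ofReal ((2:ℝ)^(-(ε*(r:ℝ))) / 2) := ENNReal.ofReal_le_ofReal hreal
      _ = ENNReal.ofReal ((2:ℝ)^(-(ε*(r:ℝ)))) / 2 := by
            rw [ENNReal.ofReal_div_of_pos (by norm_num : (0:ℝ) < 2)]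
            norm_num
      _ ≤ μ E / 2 := ENNReal.div_le_div_right hμE 2
    have hEB : μ E / 2 ≤ μ (E ∩ Bᶜ) := by
      have h1 : μ E ≤ μ (E ∩ Bᶜ) + μ E / 2 := by
        calc μ E = μ ((E ∩ Bᶜ) ∪ (E ∩ B)) := by
              rw [← Set.inter_union_distrib_left, Set.compl_union_self, Set.inter_univ]
        _ ≤ μ (E ∩ Bᶜ) + μ (E ∩ B) := measure_union_le _ _
        _ ≤ μ (E ∩ Bᶜ) + μ E / 2 :=
              add_le_add_right ((measure_mono Set.inter_subset_right).trans hhalf) _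
      have h2 : μ E / 2 + μ E / 2 ≤ μ (E ∩ Bᶜ) + μ E / 2 := by
        rwa [ENNReal.add_halves]
      exact ENNReal.le_of_add_le_add_right
        (by simp [ENNReal.div_eq_top, hμEtop]) h2
    calc ENNReal.ofReal (c*r) * μ E = ENNReal.ofReal (c*r) * (2 * (μ E / 2)) := by
          rw [ENNReal.mul_div_cancel' (by norm_num) (by norm_num)]
    _ = (ENNReal.ofReal (c*r) * 2) * (μ E / 2) := (mul_assoc _ _ _).symm
    _ = ENNReal.ofReal s₀ * (μ E / 2) := by
          have hs0 : ENNReal.ofReal s₀ = ENNReal.ofReal (c*(r:ℝ)) * 2 := by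
            rw [show s₀ = c*(r:ℝ)*2 by rw [hcdef, hs₀def]; ring,
              ENNReal.ofReal_mul (by positivity : (0:ℝ) ≤ c*(r:ℝ))]
            norm_num
          rw [hs0]
    _ ≤ ENNReal.ofReal s₀ * μ (E ∩ Bᶜ) := mul_le_mul_right hEB _
    _ = ∫⁻ _ω in E ∩ Bᶜ, ENNReal.ofReal s₀ ∂μ := (setLIntegral_const _ _).symm
    _ ≤ ∫⁻ ω in E ∩ Bᶜ, ENNReal.ofReal (∑ i, Z i ω) ∂μ := by
          apply setLIntegral_mono' (hEmeas.inter hBmeas.compl)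
          intro ω hω
          apply ENNReal.ofReal_le_ofReal
          have hωB : ¬ ((∑ i, Y i) ω ≤ s₀) := hω.2
          push_neg at hωB
          rw [hWapp ω] at hωB
          linarith [hWZ ω]
    _ ≤ ∫⁻ ω in E, ENNReal.ofReal (∑ i, Z i ω) ∂μ :=
          lintegral_mono_set Set.inter_subset_left
  · -- small r case
    push_neg at hr2
    have hks : 1 - p / 2 ≤ (2:ℝ) ^ (-(ε * (r:ℝ))) := by
      have h1 : (2:ℝ) ^ (-(ε*(r:ℝ))) = Real.exp (Real.log 2 * (-(ε*r))) :=
        Real.rpow_def_of_pos two_pos _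
      have h2 : 1 + Real.log 2 * (-(ε*r)) ≤ Real.exp (Real.log 2 * (-(ε*r))) := by
        have := Real.add_one_le_exp (Real.log 2 * (-(ε*r))); linarith
      have hεle : ε ≤ p * δ / (4 * Real.log 2) := min_le_right _ _
      have h4 : ε * r ≤ (p * δ / (4 * Real.log 2)) * (2 * Real.log 2 / δ) :=
        mul_le_mul hεle hr2.le hrr.le (by positivity)
      have h5 : (p * δ / (4 * Real.log 2)) * (2 * Real.log 2 / δ) = p / 2 := by
        field_simp; ring
      have h3 : ε * r * Real.log 2 ≤ p / 2 := by
        rw [h5] at h4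
        nlinarith [mul_nonneg hε.le hrr.le]
      rw [h1]
      nlinarith
    have hcompl : μ Eᶜ ≤ ENNReal.ofReal (p/2) := by
      have h1 : μ Eᶜ = 1 - μ E := prob_compl_eq_one_sub hEmeas
      rw [h1, tsub_le_iff_right]
      calc (1:ENNReal) = ENNReal.ofReal 1 := by simp
      _ ≤ ENNReal.ofReal (p/2 + (2:ℝ)^(-(ε*(r:ℝ)))) := ENNReal.ofReal_le_ofReal (by linarith)
      _ = ENNReal.ofReal (p/2) + ENNReal.ofReal ((2:ℝ)^(-(ε*(r:ℝ)))) :=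
            ENNReal.ofReal_add (by positivity) (by positivity)
      _ ≤ ENNReal.ofReal (p/2) + μ E := add_le_add_right hμE _
    have htot : ENNReal.ofReal (a * p * r) ≤ ∫⁻ ω, ENNReal.ofReal (W ω) ∂μ := by
      have h1 : ∀ i : Fin r, ENNReal.ofReal (a * p) ≤ ∫⁻ ω, ENNReal.ofReal (Y i ω) ∂μ := by
        intro i
        have hA : MeasurableSet {ω | a ≤ Z i ω} := measurableSet_le measurable_const (hZm i)
        calc ENNReal.ofReal (a*p) = ENNReal.ofReal a * ENNReal.ofReal p :=
              ENNReal.ofReal_mul ha0.le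
        _ ≤ ENNReal.ofReal a * μ {ω | a ≤ Z i ω} := mul_le_mul_right (hZp i) _
        _ = ∫⁻ _ω in {ω | a ≤ Z i ω}, ENNReal.ofReal a ∂μ := (setLIntegral_const _ _).symm
        _ ≤ ∫⁻ ω in {ω | a ≤ Z i ω}, ENNReal.ofReal (Y i ω) ∂μ :=
              setLIntegral_mono' hA (fun ω hω => ENNReal.ofReal_le_ofReal (le_min hω le_rfl))
        _ ≤ ∫⁻ ω, ENNReal.ofReal (Y i ω) ∂μ := setLIntegral_le_lintegral _ _
      have hsum : (∑ _i : Fin r, ENNReal.ofReal (a*p)) = ENNReal.ofReal (a*p*r) := by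
        rw [Finset.sum_const, Finset.card_univ, Fintype.card_fin, nsmul_eq_mul,
          ← ENNReal.ofReal_natCast r, ← ENNReal.ofReal_mul (Nat.cast_nonneg r)]
        congr 1; ring
      calc ENNReal.ofReal (a*p*r) = ∑ _i : Fin r, ENNReal.ofReal (a*p) := hsum.symm
      _ ≤ ∑ i, ∫⁻ ω, ENNReal.ofReal (Y i ω) ∂μ := Finset.sum_le_sum fun i _ => h1 i
      _ = ∫⁻ ω, ∑ i, ENNReal.ofReal (Y i ω) ∂μ :=
            (lintegral_finset_sum _ (fun i _ => (hYm i).ennreal_ofReal)).symm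
      _ = ∫⁻ ω, ENNReal.ofReal (W ω) ∂μ := by
            congr 1; funext ω
            rw [hWdef]
            exact (ENNReal.ofReal_sum_of_nonneg (fun i _ => hY0 i ω)).symm
    have hEc : ∫⁻ ω in Eᶜ, ENNReal.ofReal (W ω) ∂μ ≤ ENNReal.ofReal (r * a * (p/2)) := by
      calc ∫⁻ ω in Eᶜ, ENNReal.ofReal (W ω) ∂μ ≤ ∫⁻ _ω in Eᶜ, ENNReal.ofReal (r*a) ∂μ :=
            setLIntegral_mono' hEmeas.compl (fun ω _ => ENNReal.ofReal_le_ofReal (hWra ω))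
      _ = ENNReal.ofReal (r*a) * μ Eᶜ := setLIntegral_const _ _
      _ ≤ ENNReal.ofReal (r*a) * ENNReal.ofReal (p/2) := mul_le_mul_right hcompl _
      _ = ENNReal.ofReal (r*a*(p/2)) := by
            rw [← ENNReal.ofReal_mul (by positivity)]
    have hEcfin : ∫⁻ ω in Eᶜ, ENNReal.ofReal (W ω) ∂μ ≠ ⊤ :=
      (lt_of_le_of_lt hEc ENNReal.ofReal_lt_top).ne
    have hsplit := lintegral_add_compl (μ := μ) (fun ω => ENNReal.ofReal (W ω)) hEmeas
    calc ENNReal.ofReal (c*r) * μ E ≤ ENNReal.ofReal (c*r) * 1 := mul_le_mul_right hμE1 _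
    _ = ENNReal.ofReal (c*r) := mul_one _
    _ ≤ ∫⁻ ω in E, ENNReal.ofReal (W ω) ∂μ := by
        rw [← ENNReal.add_le_add_iff_right hEcfin, hsplit]
        calc ENNReal.ofReal (c*r) + ∫⁻ ω in Eᶜ, ENNReal.ofReal (W ω) ∂μ
            ≤ ENNReal.ofReal (c*r) + ENNReal.ofReal (r*a*(p/2)) := add_le_add_right hEc _
        _ = ENNReal.ofReal (c*r + r*a*(p/2)) := (ENNReal.ofReal_add (by positivity) (by positivity)).symm
        _ ≤ ENNReal.ofReal (a*p*r) := by
              apply ENNReal.ofReal_le_ofReal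
              rw [hcdef]
              nlinarith [mul_nonneg (mul_nonneg ha0.le hrr.le) (by linarith : (0:ℝ) ≤ p - δ)]
        _ ≤ ∫⁻ ω, ENNReal.ofReal (W ω) ∂μ := htot
    _ ≤ ∫⁻ ω in E, ENNReal.ofReal (∑ i, Z i ω) ∂μ :=
          lintegral_mono fun ω => ENNReal.ofReal_le_ofReal (hWZ ω)
end
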